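/- arXiv:2505.15641 — 2 statements merged into one kernel-verified Lean document; each statement's English description precedes it below -/
import Mathlib

section
/- If $a_1 > a_2 > \cdots > a_{n+1}$ is a strictly decreasing sequence of integers with values in $[1, m]$ (where $m \geq 1$), then $\sum_{i=1}^{n} \frac{a_i - a_{i+1}}{a_i - 1} \leq 1 + \ln m$. -/
noncomputable def Faux (a : ℤ) : ℝ := if a ≤ 1 then 0 else 1 + Real.log ((a : ℝ) - 1)

lemma Faux_nonneg {a : ℤ} (h : 1 ≤ a) : 0 ≤ Faux a := by
  unfold Faux
  split
  · exact le_rfl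
  · rename_i hgt
    have : (2:ℤ) ≤ a := by omega
    have : (2:ℝ) ≤ (a:ℝ) := by exact_mod_cast this
    have := Real.log_nonneg (by linarith : (1:ℝ) ≤ (a:ℝ) - 1)
    linarith

lemma Faux_key (n : ℕ) : ∀ (a : ℕ → ℤ), (∀ i < n, a (i + 1) < a i) → (∀ i ≤ n, 1 ≤ a i) →
    ∑ i ∈ Finset.range n, ((a i : ℝ) - (a (i + 1) : ℝ)) / ((a i : ℝ) - 1) ≤ Faux (a 0) := by
  induction n with
  | zero =>
    intro a _ hb
    simpa using Faux_nonneg (hb 0 le_rfl)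
  | succ n ih =>
    intro a hdec hb
    rw [Finset.sum_range_succ']
    have h1 : ∑ i ∈ Finset.range n,
        ((a (i + 1) : ℝ) - (a (i + 1 + 1) : ℝ)) / ((a (i + 1) : ℝ) - 1) ≤ Faux (a 1) := by
      exact ih (fun i => a (i + 1)) (fun i hi => hdec (i + 1) (by omega))
        (fun i hi => hb (i + 1) (by omega))
    have ha1 : 1 ≤ a 1 := hb 1 (by omega)
    have hlt : a 1 < a 0 := hdec 0 (by omega)
    have ha0 : (2 : ℤ) ≤ a 0 := by omega
    have ha0R : (2 : ℝ) ≤ (a 0 : ℝ) := by exact_mod_cast ha0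
    have hpos : (0 : ℝ) < (a 0 : ℝ) - 1 := by linarith
    have key : ((a 0 : ℝ) - (a 1 : ℝ)) / ((a 0 : ℝ) - 1) + Faux (a 1) ≤ Faux (a 0) := by
      have hF0 : Faux (a 0) = 1 + Real.log ((a 0 : ℝ) - 1) := by
        unfold Faux; rw [if_neg (by omega)]
      rcases eq_or_lt_of_le ha1 with h1' | h1'
      · have : Faux (a 1) = 0 := by unfold Faux; rw [if_pos (by omega)]
        rw [this, hF0]
        have : ((a 0 : ℝ) - (a 1 : ℝ)) / ((a 0 : ℝ) - 1) ≤ 1 := by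
          rw [div_le_one hpos]
          have : (a 1 : ℝ) ≥ 1 := by exact_mod_cast ha1
          linarith
        have hlog : 0 ≤ Real.log ((a 0 : ℝ) - 1) := Real.log_nonneg (by linarith)
        linarith
      · have ha1R : (2 : ℝ) ≤ (a 1 : ℝ) := by exact_mod_cast h1'
        have hpos1 : (0 : ℝ) < (a 1 : ℝ) - 1 := by linarith
        have hF1 : Faux (a 1) = 1 + Real.log ((a 1 : ℝ) - 1) := by
          unfold Faux; rw [if_neg (by omega)]
        rw [hF1, hF0]
        have hlog : Real.log (((a 1 : ℝ) - 1) / ((a 0 : ℝ) - 1)) ≤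
            ((a 1 : ℝ) - 1) / ((a 0 : ℝ) - 1) - 1 :=
          Real.log_le_sub_one_of_pos (by positivity)
        rw [Real.log_div (by linarith) (by linarith)] at hlog
        have hdiv : ((a 1 : ℝ) - 1) / ((a 0 : ℝ) - 1) - 1 =
            ((a 1 : ℝ) - (a 0 : ℝ)) / ((a 0 : ℝ) - 1) := by
          field_simp
          ring
        rw [hdiv] at hlog
        have : ((a 0 : ℝ) - (a 1 : ℝ)) / ((a 0 : ℝ) - 1) ≤
            Real.log ((a 0 : ℝ) - 1) - Real.log ((a 1 : ℝ) - 1) := by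
          have := neg_le_neg hlog
          rw [neg_sub, neg_div', neg_sub] at this
          linarith
        linarith
    linarith

/-- If `a 0 > a 1 > ⋯ > a n` is a strictly decreasing sequence of integers with
values in `[1, m]` (where `m ≥ 1`), then `∑_{i<n} (a i - a (i+1))/(a i - 1) ≤ 1 + ln m`. -/
theorem decreasing_integer_sum_bound (m : ℕ) (hm : 1 ≤ m) (n : ℕ) (a : ℕ → ℤ)
    (hdec : ∀ i < n, a (i + 1) < a i)
    (hbound : ∀ i ≤ n, 1 ≤ a i ∧ a i ≤ (m : ℤ)) :
    ∑ i ∈ Finset.range n, ((a i : ℝ) - (a (i + 1) : ℝ)) / ((a i : ℝ) - 1)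
      ≤ 1 + Real.log m := by
  have h := Faux_key n a hdec (fun i hi => (hbound i hi).1)
  have hle : Faux (a 0) ≤ 1 + Real.log m := by
    unfold Faux
    split
    · have : (0 : ℝ) ≤ Real.log m := Real.log_nonneg (by exact_mod_cast hm)
      linarith
    · rename_i hgt
      have ha0 : (2 : ℤ) ≤ a 0 := by omega
      have hmle : a 0 ≤ (m : ℤ) := (hbound 0 (by omega)).2
      have h1 : Real.log ((a 0 : ℝ) - 1) ≤ Real.log m := by
        have h2 : ((a 0 : ℝ) - 1) ≤ (m : ℝ) := by
          have : (a 0 : ℝ) ≤ (m : ℝ) := by exact_mod_cast hmle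
          linarith
        have h3 : (0:ℝ) < (a 0 : ℝ) - 1 := by
          have : (2:ℝ) ≤ (a 0 : ℝ) := by exact_mod_cast ha0
          linarith
        exact Real.log_le_log h3 h2
      linarith
  linarith
end

section
/- Let $V$ be a finite set with $|V| \geq 2$, partitioned into disjoint parts $S_1, \ldots, S_q$ with $|S_1| \geq |S_i|$ for all $i$. Let $p : V \to \mathbb{R}_{\geq 0}$ be a weight function with $p(V) > 0$, and write $p(S) = \sum_{h \in S} p(h)$. Define $\Delta = \sum_{i=1}^q \frac{p(S_i)}{p(V)}(|V| - |S_i|)$, $B = S_1$, and $J = V \setminus S_1$. Then $\frac{\Delta}{|V|-1} \geq \frac{p(J)}{2\,p(V)} + \frac{p(B)}{p(V)} \cdot \frac{|J|}{|V|-1}$. -/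
open Finset

/-- Lemma (score lower bound, single query): for a partition `S 0, …, S (q-1)` of `V`
with heavy part `S 0`, weights `p ≥ 0` with `p(V) > 0`, and
`Δ = ∑ i, (p(S i)/p(V)) (|V| - |S i|)`, `B = S 0`, `J = V \ S 0`, we have
`Δ/(|V|-1) ≥ p(J)/(2 p(V)) + (p(B)/p(V)) ⬝ |J|/(|V|-1)`. -/
theorem score_lower_bound_single_query {α : Type*} [DecidableEq α]
    (V : Finset α) (hV : 2 ≤ V.card) (q : ℕ) (h0 : 0 < q) (S : Fin q → Finset α)
    (hdisj : ∀ i j : Fin q, i ≠ j → Disjoint (S i) (S j))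
    (hunion : Finset.univ.biUnion S = V)
    (hmax : ∀ i : Fin q, (S i).card ≤ (S ⟨0, h0⟩).card)
    (p : α → ℝ) (hp : ∀ h, 0 ≤ p h) (hpV : 0 < ∑ h ∈ V, p h) :
    (∑ i : Fin q, ((∑ h ∈ S i, p h) / (∑ h ∈ V, p h)) *
        ((V.card : ℝ) - ((S i).card : ℝ))) / ((V.card : ℝ) - 1)
      ≥ (∑ h ∈ V \ S ⟨0, h0⟩, p h) / (2 * ∑ h ∈ V, p h)
        + ((∑ h ∈ S ⟨0, h0⟩, p h) / (∑ h ∈ V, p h)) *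
            (((V \ S ⟨0, h0⟩).card : ℝ) / ((V.card : ℝ) - 1)) := by
  set i0 : Fin q := ⟨0, h0⟩ with hi0
  set P : ℝ := ∑ h ∈ V, p h with hPdef
  have hsub : ∀ i, S i ⊆ V := by
    intro i
    rw [← hunion]
    exact Finset.subset_biUnion_of_mem S (mem_univ i)
  have hPsplit : P = ∑ i : Fin q, ∑ h ∈ S i, p h := by
    rw [hPdef, ← hunion, Finset.sum_biUnion]
    intro i _ j _ hij
    exact hdisj i j hij
  have hpS : ∀ i, 0 ≤ ∑ h ∈ S i, p h := fun i => Finset.sum_nonneg fun h _ => hp h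
  have hn2 : (2:ℝ) ≤ (V.card : ℝ) := by exact_mod_cast hV
  have hn1pos : (0:ℝ) < (V.card : ℝ) - 1 := by linarith
  have hPpos : 0 < P := hpV
  -- p(J)
  have hJsum : ∑ h ∈ V \ S i0, p h = P - ∑ h ∈ S i0, p h := by
    rw [Finset.sum_sdiff_eq_sub (hsub i0)]
  have hsplit : ∀ f : Fin q → ℝ, ∑ i : Fin q, f i = ∑ i ∈ univ \ {i0}, f i + f i0 := by
    intro f
    exact (Finset.sum_eq_sum_sdiff_singleton_add (mem_univ i0) f)
  have hJsum' : ∑ i ∈ univ \ {i0}, ∑ h ∈ S i, p h = ∑ h ∈ V \ S i0, p h := by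
    have := hsplit (fun i => ∑ h ∈ S i, p h)
    rw [← hPsplit] at this
    rw [hJsum]; linarith
  -- card of J
  have hcardJ : ((V \ S i0).card : ℝ) = (V.card : ℝ) - ((S i0).card : ℝ) := by
    rw [Finset.card_sdiff_of_subset (hsub i0)]
    have := Finset.card_le_card (hsub i0)
    push_cast [Nat.cast_sub this]
    ring
  -- pointwise bound for i ≠ i0
  have hterm : ∀ i ∈ univ \ {i0}, ((V.card : ℝ) - 1) / 2 * ((∑ h ∈ S i, p h) / P)
      ≤ ((∑ h ∈ S i, p h) / P) * ((V.card : ℝ) - ((S i).card : ℝ)) := by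
    intro i hi
    have hine : i ≠ i0 := by simpa using (Finset.mem_sdiff.mp hi).2
    have hcards : (S i).card + (S i0).card ≤ V.card := by
      rw [← Finset.card_union_of_disjoint (hdisj i i0 hine)]
      exact Finset.card_le_card (Finset.union_subset (hsub i) (hsub i0))
    have h2si : 2 * (S i).card ≤ V.card := by
      have := hmax i
      omega
    have h2si' : (2:ℝ) * ((S i).card : ℝ) ≤ (V.card : ℝ) := by exact_mod_cast h2si
    have hge : ((V.card : ℝ) - 1) / 2 ≤ (V.card : ℝ) - ((S i).card : ℝ) := by linarith
    have hnn : 0 ≤ (∑ h ∈ S i, p h) / P := div_nonneg (hpS i) hPpos.le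
    nlinarith [mul_le_mul_of_nonneg_right hge hnn]
  -- main bound on Δ
  have hΔ : ((V.card : ℝ) - 1) / 2 * ((∑ h ∈ V \ S i0, p h) / P)
      + ((∑ h ∈ S i0, p h) / P) * ((V.card : ℝ) - ((S i0).card : ℝ))
      ≤ ∑ i : Fin q, ((∑ h ∈ S i, p h) / P) * ((V.card : ℝ) - ((S i).card : ℝ)) := by
    rw [hsplit (fun i => ((∑ h ∈ S i, p h) / P) * ((V.card : ℝ) - ((S i).card : ℝ)))]
    have h1 : ((V.card : ℝ) - 1) / 2 * ((∑ h ∈ V \ S i0, p h) / P)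
        = ∑ i ∈ univ \ {i0}, ((V.card : ℝ) - 1) / 2 * ((∑ h ∈ S i, p h) / P) := by
      rw [← Finset.mul_sum, ← Finset.sum_div, hJsum']
    rw [h1]
    exact add_le_add_left (Finset.sum_le_sum hterm) _
  rw [ge_iff_le, hcardJ]
  have hne : ((V.card : ℝ) - 1) ≠ 0 := ne_of_gt hn1pos
  have hPne : P ≠ 0 := ne_of_gt hPpos
  calc (∑ h ∈ V \ S i0, p h) / (2 * P)
        + ((∑ h ∈ S i0, p h) / P) * (((V.card : ℝ) - ((S i0).card : ℝ)) / ((V.card : ℝ) - 1))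
      = (((V.card : ℝ) - 1) / 2 * ((∑ h ∈ V \ S i0, p h) / P)
          + ((∑ h ∈ S i0, p h) / P) * ((V.card : ℝ) - ((S i0).card : ℝ)))
          / ((V.card : ℝ) - 1) := by
        field_simp
    _ ≤ _ := (div_le_div_iff_of_pos_right hn1pos).mpr hΔ
end
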